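/- Define h : {(x,y) : 0 ≤ x ≤ y ≤ 1} → ℝ by h(x,y) = (1/2)·max(x+y−2/3, 0) + (2/3)·max(x+y−1, 0) + x/3 + 2/3. Then for all 0 ≤ θ₁ ≤ θ₂ ≤ θ₃ ≤ 1, writing s = max(θ₁+θ₂+θ₃, 1), we have 2s ≤ h(θ₁,θ₂) + h(θ₁,θ₃) + h(θ₂,θ₃) ≤ (7/3)·s. -/
import Mathlib

noncomputable def hA (x y : ℝ) : ℝ :=
  1 / 2 * max (x + y - 2 / 3) 0 + 2 / 3 * max (x + y - 1) 0 + x / 3 + 2 / 3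

set_option maxHeartbeats 2000000 in
theorem stmt_6 : ∀ θ₁ θ₂ θ₃ : ℝ, 0 ≤ θ₁ → θ₁ ≤ θ₂ → θ₂ ≤ θ₃ → θ₃ ≤ 1 →
    2 * max (θ₁ + θ₂ + θ₃) 1 ≤ hA θ₁ θ₂ + hA θ₁ θ₃ + hA θ₂ θ₃ ∧
    hA θ₁ θ₂ + hA θ₁ θ₃ + hA θ₂ θ₃ ≤ 7 / 3 * max (θ₁ + θ₂ + θ₃) 1 := by
  intro θ₁ θ₂ θ₃ h0 h12 h23 h31
  unfold hA
  simp only [max_def]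
  split_ifs <;> constructor <;> linarith
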